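/- arXiv:2001.08083 — 2 statements merged into one kernel-verified Lean document; each statement's English description precedes it below -/
import Mathlib

section
/- Let X₁, …, X_ℓ (ℓ ∈ ℕ₊) be AIMD matrices such that at least one X_g equals the full back-off matrix B = β·I + ((1−β)/n)·e·eᵀ. Then for every nonzero z ∈ ℝⁿ with eᵀz = 0, the strict inequality ‖X_ℓ ⋯ X₂ X₁ z‖₁ < ‖z‖₁ holds. -/
noncomputable def l1 {n : ℕ} (z : Fin n → ℝ) : ℝ := ∑ i, |z i|

/-- `A` is an AIMD matrix: `A = diag(β̃) + (1/n)·e·(eᵀ − β̃ᵀ)` where each `β̃ᵢ ∈ {β, 1}`. -/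
def IsAIMD (n : ℕ) (β : ℝ) (A : Matrix (Fin n) (Fin n) ℝ) : Prop :=
  ∃ b : Fin n → ℝ, (∀ i, b i = β ∨ b i = 1) ∧
    A = Matrix.diagonal b + (1 / (n : ℝ)) • Matrix.of (fun _ j => 1 - b j)

/-- The full back-off AIMD matrix `B = β·I + ((1−β)/n)·e·eᵀ`. -/
noncomputable def Bmat (n : ℕ) (β : ℝ) : Matrix (Fin n) (Fin n) ℝ :=
  β • (1 : Matrix (Fin n) (Fin n) ℝ) + ((1 - β) / (n : ℝ)) • Matrix.of (fun _ _ => (1 : ℝ))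

/-- Column-stochastic with nonnegative entries. -/
def Good (n : ℕ) (A : Matrix (Fin n) (Fin n) ℝ) : Prop :=
  (∀ i j, 0 ≤ A i j) ∧ (∀ j, ∑ i, A i j = 1)

lemma l1_nonneg {n : ℕ} (z : Fin n → ℝ) : 0 ≤ l1 z :=
  Finset.sum_nonneg fun _ _ => abs_nonneg _

lemma l1_pos {n : ℕ} (z : Fin n → ℝ) (hz : z ≠ 0) : 0 < l1 z := by
  obtain ⟨i, hi⟩ := Function.ne_iff.mp hz
  have : |z i| ≤ l1 z :=
    Finset.single_le_sum (f := fun j => |z j|) (fun j _ => abs_nonneg _) (Finset.mem_univ i)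
  exact lt_of_lt_of_le (abs_pos.mpr hi) this

lemma l1_smul {n : ℕ} (c : ℝ) (hc : 0 ≤ c) (z : Fin n → ℝ) : l1 (c • z) = c * l1 z := by
  simp [l1, Finset.mul_sum, abs_mul, abs_of_nonneg hc]

lemma good_sum {n : ℕ} {A : Matrix (Fin n) (Fin n) ℝ} (hA : Good n A) (z : Fin n → ℝ) :
    ∑ i, A.mulVec z i = ∑ j, z j := by
  simp only [Matrix.mulVec, dotProduct]
  rw [Finset.sum_comm]
  refine Finset.sum_congr rfl fun j _ => ?_
  rw [← Finset.sum_mul, hA.2 j, one_mul]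

lemma good_nonexp {n : ℕ} {A : Matrix (Fin n) (Fin n) ℝ} (hA : Good n A) (z : Fin n → ℝ) :
    l1 (A.mulVec z) ≤ l1 z := by
  have h1 : ∀ i, |A.mulVec z i| ≤ ∑ j, A i j * |z j| := by
    intro i
    calc |∑ j, A i j * z j| ≤ ∑ j, |A i j * z j| := Finset.abs_sum_le_sum_abs _ _
      _ = ∑ j, A i j * |z j| := by
          refine Finset.sum_congr rfl fun j _ => ?_
          rw [abs_mul, abs_of_nonneg (hA.1 i j)]
  calc l1 (A.mulVec z) ≤ ∑ i, ∑ j, A i j * |z j| :=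
        Finset.sum_le_sum fun i _ => h1 i
    _ = ∑ j, (∑ i, A i j) * |z j| := by
        rw [Finset.sum_comm]; exact Finset.sum_congr rfl fun j _ => (Finset.sum_mul ..).symm
    _ = l1 z := by simp [hA.2, l1]

lemma aimd_good {n : ℕ} (hn : 0 < n) {β : ℝ} (hβ0 : 0 < β) (hβ1 : β < 1)
    {A : Matrix (Fin n) (Fin n) ℝ} (hA : IsAIMD n β A) : Good n A := by
  obtain ⟨b, hb, rfl⟩ := hA
  have hb0 : ∀ j, 0 < b j := fun j => (hb j).elim (fun h => h ▸ hβ0) (fun h => h ▸ one_pos)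
  have hb1 : ∀ j, b j ≤ 1 := fun j => (hb j).elim (fun h => h ▸ hβ1.le) (fun h => h ▸ le_refl _)
  have hnR : (0 : ℝ) < (n : ℝ) := by exact_mod_cast hn
  constructor
  · intro i j
    simp only [Matrix.add_apply, Matrix.diagonal_apply, Matrix.smul_apply, Matrix.of_apply,
      smul_eq_mul]
    have h2 : 0 ≤ 1 / (n : ℝ) * (1 - b j) := by
      apply mul_nonneg (by positivity); linarith [hb1 j]
    split
    · next h => subst h; linarith [(hb0 i).le]
    · linarith
  · intro j
    simp only [Matrix.add_apply, Matrix.diagonal_apply, Matrix.smul_apply, Matrix.of_apply,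
      smul_eq_mul]
    rw [Finset.sum_add_distrib, Finset.sum_ite_eq' Finset.univ j b]
    simp only [Finset.mem_univ, if_true, Finset.sum_const, Finset.card_univ, Fintype.card_fin,
      nsmul_eq_mul]
    field_simp
    ring

lemma bmat_mulVec {n : ℕ} (hn : 0 < n) {β : ℝ} (z : Fin n → ℝ) (hz : ∑ i, z i = 0) :
    (Bmat n β).mulVec z = β • z := by
  funext i
  simp only [Bmat, Matrix.mulVec, dotProduct, Matrix.add_apply, Matrix.smul_apply,
    Matrix.one_apply, Matrix.of_apply, smul_eq_mul]
  have : ∑ j, (β * (if i = j then (1:ℝ) else 0) + (1 - β) / (n : ℝ) * 1) * z j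
      = ∑ j, (β * (if i = j then z j else 0) + (1 - β) / (n : ℝ) * z j) := by
    refine Finset.sum_congr rfl fun j _ => by split <;> ring
  rw [this, Finset.sum_add_distrib, ← Finset.mul_sum, ← Finset.mul_sum, Finset.sum_ite_eq Finset.univ i z, hz]
  simp

lemma apply_cons {n : ℕ} (A : Matrix (Fin n) (Fin n) ℝ) (L : List (Matrix (Fin n) (Fin n) ℝ))
    (z : Fin n → ℝ) :
    ((A :: L).reverse.prod).mulVec z = (L.reverse.prod).mulVec (A.mulVec z) := by
  rw [List.reverse_cons, List.prod_append, List.prod_singleton, ← Matrix.mulVec_mulVec]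

lemma list_nonexp {n : ℕ} (L : List (Matrix (Fin n) (Fin n) ℝ))
    (hL : ∀ A ∈ L, Good n A) (z : Fin n → ℝ) :
    l1 ((L.reverse.prod).mulVec z) ≤ l1 z := by
  induction L generalizing z with
  | nil => simp [Matrix.mulVec_one]
  | cons A L ih =>
    rw [apply_cons]
    exact le_trans (ih (fun M hM => hL M (List.mem_cons_of_mem _ hM)) _)
      (good_nonexp (hL A (List.mem_cons_self)) z)

lemma list_contract {n : ℕ} (hn : 0 < n) {β : ℝ} (hβ0 : 0 < β)
    (L : List (Matrix (Fin n) (Fin n) ℝ))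
    (hL : ∀ A ∈ L, Good n A) (hB : Bmat n β ∈ L) (z : Fin n → ℝ) (hz : ∑ i, z i = 0) :
    l1 ((L.reverse.prod).mulVec z) ≤ β * l1 z := by
  induction L generalizing z with
  | nil => simp at hB
  | cons A L ih =>
    rw [apply_cons]
    rcases List.mem_cons.mp hB with h | h
    · rw [← h, bmat_mulVec hn z hz]
      calc l1 ((L.reverse.prod).mulVec (β • z)) ≤ l1 (β • z) :=
            list_nonexp L (fun M hM => hL M (List.mem_cons_of_mem _ hM)) _
        _ = β * l1 z := l1_smul β hβ0.le z
    · have hA := hL A (List.mem_cons_self)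
      have hsum : ∑ i, A.mulVec z i = 0 := by rw [good_sum hA, hz]
      calc l1 ((L.reverse.prod).mulVec (A.mulVec z))
          ≤ β * l1 (A.mulVec z) :=
            ih (fun M hM => hL M (List.mem_cons_of_mem _ hM)) h _ hsum
        _ ≤ β * l1 z := by
            have := good_nonexp hA z
            nlinarith [l1_nonneg (A.mulVec z)]

/-- If `X₁, …, X_ℓ` are AIMD matrices with at least one equal to the full back-off
matrix `B`, then `‖X_ℓ ⋯ X₂ X₁ z‖₁ < ‖z‖₁` for every nonzero `z` with `eᵀz = 0`. -/
theorem prod_aimd_with_backoff_strict_contraction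
    (n : ℕ) (hn : 0 < n) (β : ℝ) (hβ0 : 0 < β) (hβ1 : β < 1)
    (l : ℕ) (hl : 0 < l) (X : Fin l → Matrix (Fin n) (Fin n) ℝ)
    (hX : ∀ g, IsAIMD n β (X g))
    (hB : ∃ g, X g = Bmat n β)
    (z : Fin n → ℝ) (hz0 : z ≠ 0) (hzsum : ∑ i, z i = 0) :
    l1 ((List.ofFn X).reverse.prod.mulVec z) < l1 z := by
  obtain ⟨g, hg⟩ := hB
  have hmem : Bmat n β ∈ List.ofFn X := by
    rw [List.mem_ofFn]; exact ⟨g, hg⟩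
  have hgood : ∀ A ∈ List.ofFn X, Good n A := by
    intro A hA
    obtain ⟨i, hi⟩ := List.mem_ofFn.mp hA
    exact aimd_good hn hβ0 hβ1 (hi ▸ hX i)
  have h := list_contract hn hβ0 (List.ofFn X) hgood hmem z hzsum
  have hpos := l1_pos z hz0
  nlinarith
end

section
/- Let H = blockdiag(P¹, P²), where for j = 1, 2 the matrix Pʲ is a finite product of matrices of the form D(Aʲ_g) with each Aʲ_g an entrywise nonnegative column stochastic n×n matrix (an empty product being the Tn×Tn identity). Then for every z ∈ W, the non-expansive property ‖Hz‖ ≤ ‖z‖ holds. -/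
noncomputable def normT {n T : ℕ} (z : Fin T → Fin n → ℝ) : ℝ := ⨆ ℓ, l1 (z ℓ)

/-- The action of the block matrix `D(A)` on a block vector `z ∈ ℝ^{Tn}`:
`(D(A)z)₁ = A z₁` and `(D(A)z)_r = (1/r)·A z₁ + ((r−1)/r)·z_{r−1}` for `r = 2,…,T`
(indices here are 0-based). -/
noncomputable def DApply {n T : ℕ} (A : Matrix (Fin n) (Fin n) ℝ)
    (z : Fin T → Fin n → ℝ) : Fin T → Fin n → ℝ :=
  fun r => (1 / ((r : ℕ) + 1) : ℝ) • A.mulVec (z ⟨0, r.pos⟩)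
    + (((r : ℕ) : ℝ) / ((r : ℕ) + 1)) • z ⟨(r : ℕ) - 1, lt_of_le_of_lt (Nat.pred_le _) r.isLt⟩

/-- The norm on pairs: `‖(y¹, y²)‖ = max{‖y¹‖_T, ‖y²‖_T}`. -/
noncomputable def normPair {n T : ℕ} (y : (Fin T → Fin n → ℝ) × (Fin T → Fin n → ℝ)) : ℝ :=
  max (normT y.1) (normT y.2)

lemma l1_mulVec_le {n : ℕ} (A : Matrix (Fin n) (Fin n) ℝ)
    (hnn : ∀ i j, 0 ≤ A i j) (hcs : ∀ j, ∑ i, A i j = 1)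
    (z : Fin n → ℝ) : l1 (A.mulVec z) ≤ l1 z := by
  unfold l1
  calc ∑ i, |A.mulVec z i| ≤ ∑ i, ∑ j, A i j * |z j| := by
        apply Finset.sum_le_sum; intro i _
        calc |A.mulVec z i| = |∑ j, A i j * z j| := by
              simp [Matrix.mulVec, dotProduct]
          _ ≤ ∑ j, |A i j * z j| := Finset.abs_sum_le_sum_abs _ _
          _ = ∑ j, A i j * |z j| := by
              apply Finset.sum_congr rfl; intro j _
              rw [abs_mul, abs_of_nonneg (hnn i j)]
    _ = ∑ j, (∑ i, A i j) * |z j| := by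
        rw [Finset.sum_comm]; simp [Finset.sum_mul]
    _ = ∑ j, |z j| := by simp [hcs]

lemma l1_smul_add {n : ℕ} (a b : ℝ) (ha : 0 ≤ a) (hb : 0 ≤ b) (x y : Fin n → ℝ) :
    l1 (a • x + b • y) ≤ a * l1 x + b * l1 y := by
  unfold l1
  rw [Finset.mul_sum, Finset.mul_sum, ← Finset.sum_add_distrib]
  apply Finset.sum_le_sum; intro i _
  simp only [Pi.add_apply, Pi.smul_apply, smul_eq_mul]
  calc |a * x i + b * y i| ≤ |a * x i| + |b * y i| := abs_add_le _ _
    _ = a * |x i| + b * |y i| := by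
        rw [abs_mul, abs_mul, abs_of_nonneg ha, abs_of_nonneg hb]

lemma l1_le_normT {n T : ℕ} (z : Fin T → Fin n → ℝ) (ℓ : Fin T) :
    l1 (z ℓ) ≤ normT z := by
  unfold normT
  exact le_ciSup (Set.Finite.bddAbove (Set.finite_range fun ℓ => l1 (z ℓ))) ℓ

lemma normT_DApply_le {n T : ℕ} (hT : 0 < T) (A : Matrix (Fin n) (Fin n) ℝ)
    (hnn : ∀ i j, 0 ≤ A i j) (hcs : ∀ j, ∑ i, A i j = 1)
    (z : Fin T → Fin n → ℝ) : normT (DApply A z) ≤ normT z := by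
  haveI : Nonempty (Fin T) := ⟨⟨0, hT⟩⟩
  apply ciSup_le
  intro r
  have ha : (0:ℝ) ≤ 1 / ((r : ℕ) + 1) := by positivity
  have hb : (0:ℝ) ≤ ((r : ℕ) : ℝ) / ((r : ℕ) + 1) := by positivity
  have h0 : l1 (A.mulVec (z ⟨0, r.pos⟩)) ≤ normT z :=
    le_trans (l1_mulVec_le A hnn hcs _) (l1_le_normT z _)
  have h1 : l1 (z ⟨(r : ℕ) - 1, lt_of_le_of_lt (Nat.pred_le _) r.isLt⟩) ≤ normT z :=
    l1_le_normT z _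
  calc l1 (DApply A z r)
      ≤ (1 / ((r : ℕ) + 1)) * l1 (A.mulVec (z ⟨0, r.pos⟩))
        + (((r : ℕ) : ℝ) / ((r : ℕ) + 1)) * l1 (z ⟨(r : ℕ) - 1, _⟩) :=
        l1_smul_add _ _ ha hb _ _
    _ ≤ (1 / ((r : ℕ) + 1)) * normT z + (((r : ℕ) : ℝ) / ((r : ℕ) + 1)) * normT z := by
        gcongr
    _ = normT z := by
        rw [← add_mul]
        have : (1 / ((r : ℕ) + 1) : ℝ) + ((r : ℕ) : ℝ) / ((r : ℕ) + 1) = 1 := by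
          field_simp
          ring
        rw [this, one_mul]

lemma normT_foldl_le {n T : ℕ} (hT : 0 < T) (L : List (Matrix (Fin n) (Fin n) ℝ))
    (hL : ∀ A ∈ L, (∀ i j, 0 ≤ A i j) ∧ (∀ j, ∑ i, A i j = 1))
    (z : Fin T → Fin n → ℝ) :
    normT (L.foldl (fun v Ag => DApply Ag v) z) ≤ normT z := by
  induction L generalizing z with
  | nil => simp
  | cons A L ih =>
    simp only [List.foldl_cons]
    exact le_trans
      (ih (fun B hB => hL B (List.mem_cons_of_mem _ hB)) (DApply A z))
      (normT_DApply_le hT A (hL A (List.mem_cons_self)).1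
        (hL A (List.mem_cons_self)).2 z)

/-- Let `H = blockdiag(P¹, P²)`, where each `Pʲ` is a finite product of matrices `D(Aʲ_g)`
with each `Aʲ_g` entrywise nonnegative column stochastic (empty product = identity).
Then `‖Hz‖ ≤ ‖z‖` for every `z ∈ W`. -/
theorem H_nonexpansive_on_W
    (n T : ℕ) (hn : 0 < n) (hT : 0 < T)
    (m1 m2 : ℕ)
    (A1 : Fin m1 → Matrix (Fin n) (Fin n) ℝ)
    (A2 : Fin m2 → Matrix (Fin n) (Fin n) ℝ)
    (hA1nn : ∀ g i j, 0 ≤ A1 g i j) (hA1 : ∀ g j, ∑ i, A1 g i j = 1)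
    (hA2nn : ∀ g i j, 0 ≤ A2 g i j) (hA2 : ∀ g j, ∑ i, A2 g i j = 1)
    (z1 z2 : Fin T → Fin n → ℝ)
    (hz1 : ∀ t, ∑ i, z1 t i = 0) (hz2 : ∀ t, ∑ i, z2 t i = 0) :
    normPair ((List.ofFn A1).foldl (fun v Ag => DApply Ag v) z1,
              (List.ofFn A2).foldl (fun v Ag => DApply Ag v) z2) ≤
    normPair (z1, z2) := by
  have h1 : normT ((List.ofFn A1).foldl (fun v Ag => DApply Ag v) z1) ≤ normT z1 := by
    apply normT_foldl_le hT
    intro A hA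
    obtain ⟨g, rfl⟩ := List.mem_ofFn.1 hA
    exact ⟨hA1nn g, hA1 g⟩
  have h2 : normT ((List.ofFn A2).foldl (fun v Ag => DApply Ag v) z2) ≤ normT z2 := by
    apply normT_foldl_le hT
    intro A hA
    obtain ⟨g, rfl⟩ := List.mem_ofFn.1 hA
    exact ⟨hA2nn g, hA2 g⟩
  exact max_le_max h1 h2
end
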